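/- Let X be a finite set of cardinality N, let 0 ≤ k < N, and let E be an exponential family on X of dimension k (i.e. with extended tangent space T of dimension k+1). Then sup_P inf_{Q∈E} D(P‖Q) ≥ log N − log(k+1), where the supremum is over all probability distributions P on X. -/

import Mathlib

open scoped BigOperators Classical

noncomputable section

variable {X : Type*}

/-- A probability distribution on a finite set `X`. -/
def IsProb [Fintype X] (P : X → ℝ) : Prop :=
  (∀ x, 0 ≤ P x) ∧ ∑ x, P x = 1

/-- Information divergence `D(P‖Q)` with values in `EReal`, equal to `⊤` if the
support of `P` is not contained in the support of `Q`.  (The convention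
`0 · log 0 = 0` holds automatically since `Real.log 0 = 0`.) -/
def KL [Fintype X] (P Q : X → ℝ) : EReal :=
  if ∀ x, Q x = 0 → P x = 0 then ((∑ x, P x * Real.log (P x / Q x) : ℝ) : EReal) else ⊤

/-- The exponential family with strictly positive reference measure `ν` and extended
tangent space `T` (a subspace of `ℝ^X` containing the constants): the set of strictly
positive probability distributions `P` with `log (P/ν) ∈ T`. -/
def expFam [Fintype X] (ν : X → ℝ) (T : Submodule ℝ (X → ℝ)) : Set (X → ℝ) :=
  {P | (∀ x, 0 < P x) ∧ ∑ x, P x = 1 ∧ (fun x => Real.log (P x / ν x)) ∈ T}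

/-- `sup_P inf_{Q ∈ E} D(P‖Q)`, supremum over all probability distributions `P`. -/
def maxDiv [Fintype X] (E : Set (X → ℝ)) : EReal :=
  ⨆ P ∈ {P : X → ℝ | IsProb P}, ⨅ Q ∈ E, KL P Q

/-- The orthogonal complement of `T` in `ℝ^X` w.r.t. the standard inner product
(the normal space of the exponential family with extended tangent space `T`). -/
def orthSpace [Fintype X] (T : Submodule ℝ (X → ℝ)) : Set (X → ℝ) :=
  {u | ∀ t ∈ T, ∑ x, u x * t x = 0}

/-- A circuit vector of a set `N ⊆ ℝ^X`: a nonzero element whose support is minimal,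
i.e. every `u ∈ N` with `supp u ⊆ supp v` is a scalar multiple of `v`. -/
def IsCircuitVector (N : Set (X → ℝ)) (v : X → ℝ) : Prop :=
  v ∈ N ∧ v ≠ 0 ∧ ∀ u ∈ N, Function.support u ⊆ Function.support v → ∃ α : ℝ, u = α • v

/-- A circuit of `N`: the support of a circuit vector. -/
def IsCircuit (N : Set (X → ℝ)) (σ : Set X) : Prop :=
  ∃ v, IsCircuitVector N v ∧ σ = Function.support v

/-- The closed partition model of the partition given by the equivalence relation `r`:
all probability distributions constant on each block. -/
def partModel [Fintype X] (r : X → X → Prop) : Set (X → ℝ) :=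
  {Q | IsProb Q ∧ ∀ x y, r x y → Q x = Q y}

/-- The partition exponential family of the partition given by the equivalence
relation `r`: all strictly positive probability distributions constant on each block. -/
def partExpFam [Fintype X] (r : X → X → Prop) : Set (X → ℝ) :=
  {P | (∀ x, 0 < P x) ∧ ∑ x, P x = 1 ∧ ∀ x y, r x y → P x = P y}

/-- The set `X̲` of points not annihilated by all of `N`. -/
def underlineSet (N : Set (X → ℝ)) : Set X := {x | ∃ v ∈ N, v x ≠ 0}

/-- The relation `x ∼ y` : every `v ∈ N` with `v x ≠ 0` has `v y ≠ 0`. -/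
def coRel (N : Set (X → ℝ)) (x y : X) : Prop := ∀ v ∈ N, v x ≠ 0 → v y ≠ 0

/-- `Z` is an equivalence class of `∼` on `X̲`. -/
def IsClassOf (N : Set (X → ℝ)) (Z : Set X) : Prop :=
  ∃ x ∈ underlineSet N, Z = {y | coRel N x y}

end


lemma exists_orth_vector {X : Type*} [Fintype X] (T : Submodule ℝ (X → ℝ))
    (S : Finset X) (hS : Module.finrank ℝ ↥T < S.card) :
    ∃ d : X → ℝ, d ≠ 0 ∧ (∀ x, d x ≠ 0 → x ∈ S) ∧ ∀ t ∈ T, ∑ x, d x * t x = 0 := by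
  classical
  set evs : ↥S → Module.Dual ℝ ↥T := fun y => (LinearMap.proj (y : X)).comp T.subtype with hevs
  set φ : (↥S → ℝ) →ₗ[ℝ] Module.Dual ℝ ↥T := Fintype.linearCombination ℝ evs with hφ
  have hni : ¬ Function.Injective φ := by
    intro hinj
    have h1 : Module.finrank ℝ (↥S → ℝ) ≤ Module.finrank ℝ (Module.Dual ℝ ↥T) :=
      LinearMap.finrank_le_finrank_of_injective hinj
    rw [Module.finrank_pi, Subspace.dual_finrank_eq, Fintype.card_coe] at h1
    omega
  rw [← LinearMap.ker_eq_bot] at hni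
  obtain ⟨c, hc, hc0⟩ := Submodule.exists_mem_ne_zero_of_ne_bot hni
  refine ⟨fun x => if h : x ∈ S then c ⟨x, h⟩ else 0, ?_, ?_, ?_⟩
  · intro h0
    apply hc0
    funext y
    have := congrFun h0 (y : X)
    simpa [y.2] using this
  · intro x hx
    by_contra h
    simp [h] at hx
  · intro t ht
    have hker : φ c = 0 := hc
    have := congrFun (congrArg (fun (f : Module.Dual ℝ ↥T) => (f : ↥T → ℝ)) hker) ⟨t, ht⟩
    have hval : ∑ y : ↥S, c y * t (y : X) = 0 := by
      rw [hφ] at this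
      simpa [Fintype.linearCombination_apply, hevs] using this
    rw [← Finset.sum_subset (Finset.subset_univ S) (by intro x _ hx; simp [hx])]
    rw [← Finset.sum_attach S (fun x => (if h : x ∈ S then c ⟨x, h⟩ else 0) * t x)]
    simpa using hval

lemma exists_sparse {X : Type*} [Fintype X] (T : Submodule ℝ (X → ℝ))
    (h1 : (fun _ => (1:ℝ)) ∈ T) (w : X → ℝ) :
    ∀ (n : ℕ) (P : X → ℝ), (Finset.univ.filter (fun x => P x ≠ 0)).card ≤ n →
      (∀ x, 0 ≤ P x) →
      ∃ P' : X → ℝ, (∀ x, 0 ≤ P' x) ∧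
        (∀ t ∈ T, ∑ x, P' x * t x = ∑ x, P x * t x) ∧
        (Finset.univ.filter (fun x => P' x ≠ 0)).card ≤ Module.finrank ℝ ↥T ∧
        ∑ x, P x * w x ≤ ∑ x, P' x * w x := by
  intro n
  induction n with
  | zero =>
    intro P hcard hpos
    exact ⟨P, hpos, fun t _ => rfl, le_trans hcard (Nat.zero_le _), le_refl _⟩
  | succ n ih =>
    intro P hcard hpos
    by_cases hle : (Finset.univ.filter (fun x => P x ≠ 0)).card ≤ Module.finrank ℝ ↥T
    · exact ⟨P, hpos, fun t _ => rfl, hle, le_refl _⟩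
    push_neg at hle
    obtain ⟨d, hd0, hdsupp, hdmom⟩ := exists_orth_vector T _ hle
    -- WLOG the w-functional of d is nonnegative
    obtain ⟨e, he0, hesupp, hemom, hew⟩ :
        ∃ e : X → ℝ, e ≠ 0 ∧ (∀ x, e x ≠ 0 → P x ≠ 0) ∧
          (∀ t ∈ T, ∑ x, e x * t x = 0) ∧ 0 ≤ ∑ x, e x * w x := by
      rcases le_or_gt 0 (∑ x, d x * w x) with h | h
      · exact ⟨d, hd0, fun x hx => by simpa using hdsupp x hx, hdmom, h⟩
      · refine ⟨-d, by simpa using hd0, fun x hx => by simpa using hdsupp x (by simpa using hx),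
          fun t ht => ?_, ?_⟩
        · have := hdmom t ht
          simp only [Pi.neg_apply, neg_mul]
          rw [Finset.sum_neg_distrib]
          linarith
        · simp only [Pi.neg_apply, neg_mul]
          rw [Finset.sum_neg_distrib]
          linarith
    -- e sums to zero, hence has a negative entry
    have hesum : ∑ x, e x = 0 := by simpa using hemom _ h1
    have hneg : ∃ x, e x < 0 := by
      by_contra h
      push_neg at h
      apply he0
      funext x
      exact (Finset.sum_eq_zero_iff_of_nonneg (fun y _ => h y)).mp hesum x (Finset.mem_univ x)
    obtain ⟨x0, hx0⟩ := hneg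
    have hne : (Finset.univ.filter (fun x => e x < 0)).Nonempty :=
      ⟨x0, by simp [hx0]⟩
    obtain ⟨z, hzmem, hzmin⟩ := Finset.exists_min_image _ (fun x => P x / (-e x)) hne
    have hez : e z < 0 := by simpa using hzmem
    set ts : ℝ := P z / (-e z) with hts
    have hts0 : 0 ≤ ts := div_nonneg (hpos z) (by linarith)
    set P' : X → ℝ := fun x => P x + ts * e x with hP'
    have hP'pos : ∀ x, 0 ≤ P' x := by
      intro x
      rcases lt_or_ge (e x) 0 with hx | hx
      · have hmin : ts ≤ P x / (-e x) := hzmin x (by simp [hx])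
        have : ts * (-e x) ≤ P x := (le_div_iff₀ (by linarith)).mp hmin
        simp only [hP']
        nlinarith
      · exact add_nonneg (hpos x) (mul_nonneg hts0 hx)
    have hP'z : P' z = 0 := by
      have hezne : e z ≠ 0 := ne_of_lt hez
      have : ts * e z = -P z := by
        rw [hts, div_mul_eq_mul_div, mul_div_assoc, div_neg, div_self hezne]
        ring
      simp [hP', this]
    have hsub : (Finset.univ.filter (fun x => P' x ≠ 0)) ⊆
        (Finset.univ.filter (fun x => P x ≠ 0)).erase z := by
      intro x hx
      simp only [Finset.mem_filter, Finset.mem_univ, true_and] at hx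
      rw [Finset.mem_erase]
      constructor
      · rintro rfl; exact hx hP'z
      · simp only [Finset.mem_filter, Finset.mem_univ, true_and]
        intro hPx
        apply hx
        have : e x = 0 := by
          by_contra he
          exact hesupp x he hPx
        simp [hP', hPx, this]
    have hzP : z ∈ Finset.univ.filter (fun x => P x ≠ 0) := by
      simp only [Finset.mem_filter, Finset.mem_univ, true_and]
      exact hesupp z (by linarith)
    have hcard' : (Finset.univ.filter (fun x => P' x ≠ 0)).card ≤ n := by
      have h1' := Finset.card_le_card hsub
      have h2' := Finset.card_erase_of_mem hzP
      have h3' : 1 ≤ (Finset.univ.filter (fun x => P x ≠ 0)).card :=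
        Finset.card_pos.mpr ⟨z, hzP⟩
      omega
    have hmom' : ∀ t ∈ T, ∑ x, P' x * t x = ∑ x, P x * t x := by
      intro t ht
      have : ∑ x, P' x * t x = ∑ x, P x * t x + ts * ∑ x, e x * t x := by
        rw [Finset.mul_sum, ← Finset.sum_add_distrib]
        apply Finset.sum_congr rfl
        intro x _
        simp [hP']
        ring
      rw [this, hemom t ht, mul_zero, add_zero]
    have hw' : ∑ x, P x * w x ≤ ∑ x, P' x * w x := by
      have : ∑ x, P' x * w x = ∑ x, P x * w x + ts * ∑ x, e x * w x := by
        rw [Finset.mul_sum, ← Finset.sum_add_distrib]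
        apply Finset.sum_congr rfl
        intro x _
        simp [hP']
        ring
      rw [this]
      nlinarith
    obtain ⟨P'', h1'', h2'', h3'', h4''⟩ := ih P' hcard' hP'pos
    exact ⟨P'', h1'', fun t ht => (h2'' t ht).trans (hmom' t ht), h3'',
      le_trans hw' h4''⟩


lemma log_sum_bound {X : Type*} [Fintype X] [Nonempty X] (Q : X → ℝ) (hQ : ∀ x, 0 < Q x)
    (hsum : ∑ x, Q x = 1) :
    ∑ x, ((Fintype.card X : ℝ))⁻¹ * Real.log (Q x) ≤ -Real.log (Fintype.card X) := by
  set n := Fintype.card X with hn'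
  have hn : 0 < (n : ℝ) := by
    have := Fintype.card_pos (α := X)
    exact_mod_cast this
  have key : ∑ x, Real.log ((n : ℝ) * Q x) ≤ 0 := by
    calc ∑ x, Real.log ((n : ℝ) * Q x) ≤ ∑ x, ((n : ℝ) * Q x - 1) :=
          Finset.sum_le_sum (fun x _ => Real.log_le_sub_one_of_pos (mul_pos hn (hQ x)))
    _ = 0 := by
          rw [Finset.sum_sub_distrib, ← Finset.mul_sum, hsum]
          simp [hn']
  have expand : ∑ x, Real.log ((n : ℝ) * Q x)
      = (n : ℝ) * Real.log n + ∑ x, Real.log (Q x) := by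
    rw [Finset.sum_congr rfl (fun x _ => Real.log_mul (ne_of_gt hn) (ne_of_gt (hQ x))),
      Finset.sum_add_distrib, Finset.sum_const]
    simp [hn', nsmul_eq_mul]
  have hlog : ∑ x, Real.log (Q x) ≤ -((n : ℝ) * Real.log n) := by linarith
  rw [← Finset.mul_sum]
  have h2 : ((n : ℝ))⁻¹ * ∑ x, Real.log (Q x) ≤ ((n : ℝ))⁻¹ * (-((n : ℝ) * Real.log n)) :=
    mul_le_mul_of_nonneg_left hlog (by positivity)
  have h3 : ((n : ℝ))⁻¹ * (-((n : ℝ) * Real.log n)) = -Real.log n := by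
    field_simp
  linarith

lemma entropy_bound {X : Type*} [Fintype X] (P : X → ℝ) (hpos : ∀ x, 0 ≤ P x)
    (hsum : ∑ x, P x = 1) :
    -Real.log ((Finset.univ.filter (fun x => P x ≠ 0)).card) ≤ ∑ x, P x * Real.log (P x) := by
  classical
  set S := Finset.univ.filter (fun x => P x ≠ 0) with hS
  have hSsum : ∑ x ∈ S, P x = 1 := by
    rw [← hsum]
    exact Finset.sum_subset (Finset.subset_univ S)
      (fun x _ hx => by simpa [hS] using hx)
  have hSne : S.Nonempty := by
    rcases S.eq_empty_or_nonempty with h | h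
    · exfalso; rw [h] at hSsum; simp at hSsum
    · exact h
  have hs : 0 < (S.card : ℝ) := by exact_mod_cast Finset.card_pos.mpr hSne
  have key : ∀ x ∈ S, P x - (S.card : ℝ)⁻¹ ≤ P x * Real.log (P x * S.card) := by
    intro x hx
    have hPx : 0 < P x := lt_of_le_of_ne (hpos x) (by
      simp only [hS, Finset.mem_filter] at hx
      exact Ne.symm hx.2)
    have hy : 0 < P x * (S.card : ℝ) := by positivity
    have hl : Real.log (P x * (S.card : ℝ))⁻¹ ≤ (P x * (S.card : ℝ))⁻¹ - 1 :=
      Real.log_le_sub_one_of_pos (by positivity)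
    rw [Real.log_inv] at hl
    have hl2 : 1 - (P x * (S.card : ℝ))⁻¹ ≤ Real.log (P x * (S.card : ℝ)) := by linarith
    have h3 : P x * (1 - (P x * (S.card : ℝ))⁻¹) ≤ P x * Real.log (P x * S.card) :=
      mul_le_mul_of_nonneg_left hl2 (hpos x)
    have h4 : P x * (1 - (P x * (S.card : ℝ))⁻¹) = P x - (S.card : ℝ)⁻¹ := by
      field_simp
    linarith
  have sum_key : 1 - 1 ≤ ∑ x ∈ S, P x * Real.log (P x * S.card) := by
    have := Finset.sum_le_sum key
    have e1 : ∑ x ∈ S, (P x - (S.card : ℝ)⁻¹) = 1 - 1 := by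
      rw [Finset.sum_sub_distrib, hSsum, Finset.sum_const, nsmul_eq_mul]
      congr 1
      field_simp
    linarith
  have expand : ∑ x ∈ S, P x * Real.log (P x * S.card)
      = ∑ x ∈ S, P x * Real.log (P x) + Real.log S.card := by
    have : ∀ x ∈ S, P x * Real.log (P x * S.card)
        = P x * Real.log (P x) + P x * Real.log S.card := by
      intro x hx
      have hPx : P x ≠ 0 := by
        simp only [hS, Finset.mem_filter] at hx
        exact hx.2
      rw [Real.log_mul hPx (ne_of_gt hs)]
      ring
    rw [Finset.sum_congr rfl this, Finset.sum_add_distrib, ← Finset.sum_mul, hSsum, one_mul]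
  have final : -Real.log S.card ≤ ∑ x ∈ S, P x * Real.log (P x) := by
    rw [expand] at sum_key
    linarith
  calc -Real.log S.card ≤ ∑ x ∈ S, P x * Real.log (P x) := final
  _ = ∑ x, P x * Real.log (P x) := by
      exact Finset.sum_subset (Finset.subset_univ S)
        (fun x _ hx => by
          have : P x = 0 := by simpa [hS] using hx
          simp [this])

/-- a `k`-dimensional exponential family on `N` points has
`sup_P inf_{Q ∈ E} D(P‖Q) ≥ log N − log (k+1)`. -/
theorem stmt11 (X : Type*) [Fintype X] [Nonempty X] (N k : ℕ)
    (hN : Fintype.card X = N) (hk : k < N)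
    (ν : X → ℝ) (hν : ∀ x, 0 < ν x)
    (T : Submodule ℝ (X → ℝ)) (h1 : (fun _ => (1 : ℝ)) ∈ T)
    (hdim : Module.finrank ℝ T = k + 1) :
    ((Real.log (N : ℝ) - Real.log ((k : ℝ) + 1) : ℝ) : EReal) ≤ maxDiv (expFam ν T) := by
  classical
  have hNpos : 0 < N := lt_of_le_of_lt (Nat.zero_le k) hk
  have hNR : (0:ℝ) < (N:ℝ) := by exact_mod_cast hNpos
  set U : X → ℝ := fun _ => (N : ℝ)⁻¹ with hU
  obtain ⟨P, hPpos, hPmom, hPcard, hPw⟩ :=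
    exists_sparse T h1 (fun x => -Real.log (ν x)) (Fintype.card X) U
      ((Finset.card_filter_le _ _).trans (le_of_eq Finset.card_univ)) (fun x => by positivity)
  rw [hdim] at hPcard
  have hPsum : ∑ x, P x = 1 := by
    have h := hPmom _ h1
    simp only [mul_one] at h
    rw [h, hU, Finset.sum_const, Finset.card_univ, hN, nsmul_eq_mul]
    exact mul_inv_cancel₀ (ne_of_gt hNR)
  have hPprob : P ∈ {P : X → ℝ | IsProb P} := ⟨hPpos, hPsum⟩
  have key : ∀ Q ∈ expFam ν T,
      ((Real.log (N : ℝ) - Real.log ((k : ℝ) + 1) : ℝ) : EReal) ≤ KL P Q := by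
    intro Q hQ
    obtain ⟨hQpos, hQsum, hQT⟩ := hQ
    rw [KL, if_pos (fun x h => absurd h (ne_of_gt (hQpos x)))]
    rw [EReal.coe_le_coe_iff]
    set s := (Finset.univ.filter (fun x => P x ≠ 0)).card with hs
    have hSne : (Finset.univ.filter (fun x => P x ≠ 0)).Nonempty := by
      by_contra h
      rw [Finset.not_nonempty_iff_eq_empty] at h
      have hz : ∑ x, P x = 0 := Finset.sum_eq_zero (fun x _ => by
        by_contra hx
        have : x ∈ Finset.univ.filter (fun x => P x ≠ 0) :=
          Finset.mem_filter.mpr ⟨Finset.mem_univ x, hx⟩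
        simp [h] at this)
      rw [hPsum] at hz
      norm_num at hz
    have hs1 : 1 ≤ s := Finset.card_pos.mpr hSne
    have hsR : (0:ℝ) < (s:ℝ) := by exact_mod_cast hs1
    have hlogs : Real.log (s : ℝ) ≤ Real.log ((k : ℝ) + 1) := by
      apply Real.log_le_log hsR
      have : (s:ℝ) ≤ ((k+1 : ℕ) : ℝ) := by exact_mod_cast hPcard
      simpa using this
    have hD : -Real.log (s : ℝ) ≤ ∑ x, P x * Real.log (P x) := entropy_bound P hPpos hPsum
    have hC : ∑ x, U x * Real.log (Q x) ≤ -Real.log (N : ℝ) := by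
      have := log_sum_bound Q hQpos hQsum
      rw [hN] at this
      exact this
    have hB : ∑ x, P x * Real.log (Q x) ≤ ∑ x, U x * Real.log (Q x) := by
      have hlogQ : ∀ x, Real.log (Q x) = Real.log (ν x) + Real.log (Q x / ν x) := fun x => by
        rw [Real.log_div (ne_of_gt (hQpos x)) (ne_of_gt (hν x))]
        ring
      have eq1 : ∀ R : X → ℝ, ∑ x, R x * Real.log (Q x)
          = ∑ x, R x * Real.log (ν x) + ∑ x, R x * Real.log (Q x / ν x) := fun R => by
        rw [← Finset.sum_add_distrib]
        exact Finset.sum_congr rfl (fun x _ => by rw [hlogQ x]; ring)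
      rw [eq1 P, eq1 U]
      have m1 : ∑ x, P x * Real.log (Q x / ν x) = ∑ x, U x * Real.log (Q x / ν x) :=
        hPmom _ hQT
      have m2 : ∑ x, P x * Real.log (ν x) ≤ ∑ x, U x * Real.log (ν x) := by
        have h' := hPw
        simp only [mul_neg] at h'
        rw [Finset.sum_neg_distrib, Finset.sum_neg_distrib] at h'
        linarith
      linarith
    have hA : ∑ x, P x * Real.log (P x / Q x)
        = ∑ x, P x * Real.log (P x) - ∑ x, P x * Real.log (Q x) := by
      rw [← Finset.sum_sub_distrib]
      refine Finset.sum_congr rfl (fun x _ => ?_)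
      by_cases hx : P x = 0
      · simp [hx]
      · rw [Real.log_div hx (ne_of_gt (hQpos x))]
        ring
    rw [hA]
    linarith
  have h2 : ((Real.log (N : ℝ) - Real.log ((k : ℝ) + 1) : ℝ) : EReal)
      ≤ ⨅ Q ∈ expFam ν T, KL P Q := le_iInf₂ key
  exact h2.trans (le_iSup₂ (f := fun P (_ : P ∈ {P : X → ℝ | IsProb P}) =>
    ⨅ Q ∈ expFam ν T, KL P Q) P hPprob)
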